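/- The circuit F* constructed from a type-respecting simplified clique decomposition of an acyclic circuit F is acyclic. -/

import Mathlib

/-- A simplified clique decomposition (scd), presented as the term generating
the final labeled graph: leaves introduce single vertices with a singleton
label, binary nodes take disjoint unions, and unary nodes add a new vertex,
unite two labels, or add all edges (arcs) between two labels. -/
inductive SCD (V : Type) where
  | leaf (v : V) : SCD V
  | union (l r : SCD V) : SCD V
  | addVertex (t : SCD V) (v : V) : SCD V
  | unite (t : SCD V) (S₁ S₂ : Finset V) : SCD V
  | addAdj (t : SCD V) (S₁ S₂ : Finset V) : SCD V

variable {V : Type} [DecidableEq V]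

/-- The vertex set of the labeled graph produced by an scd. -/
def SCD.verts : SCD V → Finset V
  | .leaf v => {v}
  | .union l r => l.verts ∪ r.verts
  | .addVertex t v => t.verts ∪ {v}
  | .unite t _ _ => t.verts
  | .addAdj t _ _ => t.verts

/-- The set of labels (the partition of the vertices) of the graph produced. -/
def SCD.labels : SCD V → Finset (Finset V)
  | .leaf v => {{v}}
  | .union l r => l.labels ∪ r.labels
  | .addVertex t v => t.labels ∪ {{v}}
  | .unite t S₁ S₂ => (t.labels \ {S₁, S₂}) ∪ {S₁ ∪ S₂}
  | .addAdj t _ _ => t.labels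

/-- Well-formedness of an scd: unions are of vertex-disjoint graphs, added
vertices are new, and the unite/new-adjacency operations are applied to two
distinct existing labels. -/
def SCD.WF : SCD V → Prop
  | .leaf _ => True
  | .union l r => l.WF ∧ r.WF ∧ Disjoint l.verts r.verts
  | .addVertex t v => t.WF ∧ v ∉ t.verts
  | .unite t S₁ S₂ => t.WF ∧ S₁ ∈ t.labels ∧ S₂ ∈ t.labels ∧ S₁ ≠ S₂
  | .addAdj t S₁ S₂ => t.WF ∧ S₁ ∈ t.labels ∧ S₂ ∈ t.labels ∧ S₁ ≠ S₂

/-- The set 𝐒(T,𝐆) of all labels appearing at any node of the decomposition. -/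
def SCD.allLabels : SCD V → Finset (Finset V)
  | .leaf v => {{v}}
  | .union l r => l.allLabels ∪ r.allLabels
  | .addVertex t v => t.allLabels ∪ {{v}}
  | .unite t S₁ S₂ => t.allLabels ∪ {S₁ ∪ S₂}
  | .addAdj t _ _ => t.allLabels

/-- `T.isChild S₁ S₂`: the label `S₂` was created by uniting `S₁` with another
label somewhere in the decomposition (so `S₁` is a child of `S₂`). -/
def SCD.isChild : SCD V → Finset V → Finset V → Prop
  | .leaf _ => fun _ _ => False
  | .union l r => fun A B => l.isChild A B ∨ r.isChild A B
  | .addVertex t _ => t.isChild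
  | .unite t S₁ S₂ => fun A B => t.isChild A B ∨ ((A = S₁ ∨ A = S₂) ∧ B = S₁ ∪ S₂)
  | .addAdj t _ _ => t.isChild

/-- `T.isAdjArc S₁ S₂`: the new-adjacency operation was applied somewhere in the
decomposition, introducing all arcs from the label `S₁` to the label `S₂`. -/
def SCD.isAdjArc : SCD V → Finset V → Finset V → Prop
  | .leaf _ => fun _ _ => False
  | .union l r => fun A B => l.isAdjArc A B ∨ r.isAdjArc A B
  | .addVertex t _ => t.isAdjArc
  | .unite t _ _ => t.isAdjArc
  | .addAdj t S₁ S₂ => fun A B => t.isAdjArc A B ∨ (A = S₁ ∧ B = S₂)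

/-- The three kinds of gates associated with a label of the decomposition. -/
inductive GK where
  | oand : GK
  | oor : GK
  | inn : GK
deriving DecidableEq

/-- Gates of the circuit `F*` are pairs (label, kind); for a singleton label
the three gates coincide with the original gate, canonically represented with
kind `oand`. -/
def canon (p : Finset V × GK) : Finset V × GK :=
  if p.1.card = 1 then (p.1, GK.oand) else p

/-- An original gate of `F*`: the gate corresponding to a singleton label. -/
def OriginalGate (T : SCD V) (g : Finset V × GK) : Prop :=
  ∃ v : V, ({v} : Finset V) ∈ T.allLabels ∧ g = ({v}, GK.oand)

/-- The three kinds of wires of `F*`. -/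
inductive WKind where
  | cp : WKind   -- child-parent wire
  | pc : WKind   -- parent-child wire
  | adj : WKind  -- adjacency wire
deriving DecidableEq

/-- The wires of `F*`: child-parent wires from `oand`/`oor` of a child label to
that of its parent; parent-child wires from `in` of a parent label to `in` of a
child label; and, for each adjacency arc from `S₁` to `S₂`, an adjacency wire
from `oand(S₁)` or `oor(S₁)` (as chosen by `sel`) to `in(S₂)`. -/
def wire (T : SCD V) (sel : Finset V → Finset V → GK) :
    WKind → Finset V × GK → Finset V × GK → Prop
  | .cp, g₁, g₂ => ∃ (S₁ S₂ : Finset V) (k : GK),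
      (k = GK.oand ∨ k = GK.oor) ∧ T.isChild S₁ S₂ ∧
      g₁ = canon (S₁, k) ∧ g₂ = canon (S₂, k)
  | .pc, g₁, g₂ => ∃ S₁ S₂ : Finset V, T.isChild S₁ S₂ ∧
      g₁ = canon (S₂, GK.inn) ∧ g₂ = canon (S₁, GK.inn)
  | .adj, g₁, g₂ => ∃ S₁ S₂ : Finset V, T.isAdjArc S₁ S₂ ∧
      g₁ = canon (S₁, sel S₁ S₂) ∧ g₂ = canon (S₂, GK.inn)

/-- The wires of the original circuit `F`, as generated by the new-adjacency
arcs of the decomposition: there is a wire from `u` to `v` iff some adjacency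
arc goes from a label containing `u` to a label containing `v`. -/
def arcOf (T : SCD V) (u v : V) : Prop :=
  ∃ S₁ S₂ : Finset V, T.isAdjArc S₁ S₂ ∧ u ∈ S₁ ∧ v ∈ S₂

-- AUX-START
lemma SCD.labels_good (T : SCD V) (h : T.WF) :
    (∀ S ∈ T.labels, S.Nonempty ∧ S ⊆ T.verts) ∧
      ∀ S₁ ∈ T.labels, ∀ S₂ ∈ T.labels, S₁ ≠ S₂ → Disjoint S₁ S₂ := by
  induction T with
  | leaf v =>
      refine ⟨?_, ?_⟩
      · intro S hS
        simp only [SCD.labels, Finset.mem_singleton] at hS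
        subst hS
        exact ⟨Finset.singleton_nonempty v, by simp [SCD.verts]⟩
      · intro S₁ h₁ S₂ h₂ hne
        simp only [SCD.labels, Finset.mem_singleton] at h₁ h₂
        exact absurd (h₁.trans h₂.symm) hne
  | union l r ihl ihr =>
      obtain ⟨hl, hr, hd⟩ := h
      obtain ⟨ihl1, ihl2⟩ := ihl hl
      obtain ⟨ihr1, ihr2⟩ := ihr hr
      refine ⟨?_, ?_⟩
      · intro S hS
        simp only [SCD.labels, Finset.mem_union] at hS
        rcases hS with hS | hS
        · exact ⟨(ihl1 S hS).1, (ihl1 S hS).2.trans Finset.subset_union_left⟩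
        · exact ⟨(ihr1 S hS).1, (ihr1 S hS).2.trans Finset.subset_union_right⟩
      · intro S₁ h₁ S₂ h₂ hne
        simp only [SCD.labels, Finset.mem_union] at h₁ h₂
        rcases h₁ with h₁ | h₁ <;> rcases h₂ with h₂ | h₂
        · exact ihl2 S₁ h₁ S₂ h₂ hne
        · exact hd.mono (ihl1 S₁ h₁).2 (ihr1 S₂ h₂).2
        · exact (hd.mono (ihl1 S₂ h₂).2 (ihr1 S₁ h₁).2).symm
        · exact ihr2 S₁ h₁ S₂ h₂ hne
  | addVertex t v iht =>
      obtain ⟨ht, hv⟩ := h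
      obtain ⟨ih1, ih2⟩ := iht ht
      refine ⟨?_, ?_⟩
      · intro S hS
        simp only [SCD.labels, Finset.mem_union, Finset.mem_singleton] at hS
        rcases hS with hS | hS
        · exact ⟨(ih1 S hS).1, (ih1 S hS).2.trans (by simp [SCD.verts])⟩
        · subst hS
          exact ⟨Finset.singleton_nonempty v, by simp [SCD.verts]⟩
      · intro S₁ h₁ S₂ h₂ hne
        simp only [SCD.labels, Finset.mem_union, Finset.mem_singleton] at h₁ h₂
        rcases h₁ with h₁ | h₁ <;> rcases h₂ with h₂ | h₂
        · exact ih2 S₁ h₁ S₂ h₂ hne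
        · subst h₂
          refine Finset.disjoint_singleton_right.mpr (fun hc => hv ((ih1 S₁ h₁).2 hc))
        · subst h₁
          exact Finset.disjoint_singleton_left.mpr (fun hc => hv ((ih1 S₂ h₂).2 hc))
        · exact absurd (h₁.trans h₂.symm) hne
  | unite t S₁ S₂ iht =>
      obtain ⟨ht, hS₁, hS₂, hne⟩ := h
      obtain ⟨ih1, ih2⟩ := iht ht
      refine ⟨?_, ?_⟩
      · intro S hS
        simp only [SCD.labels, Finset.mem_union, Finset.mem_sdiff, Finset.mem_singleton] at hS
        rcases hS with ⟨hS, _⟩ | hS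
        · exact ih1 S hS
        · subst hS
          exact ⟨(ih1 S₁ hS₁).1.mono Finset.subset_union_left,
            Finset.union_subset (ih1 S₁ hS₁).2 (ih1 S₂ hS₂).2⟩
      · intro A hA B hB hAB
        simp only [SCD.labels, Finset.mem_union, Finset.mem_sdiff, Finset.mem_singleton,
          Finset.mem_insert] at hA hB
        rcases hA with ⟨hA, hA'⟩ | hA <;> rcases hB with ⟨hB, hB'⟩ | hB
        · exact ih2 A hA B hB hAB
        · subst hB
          push_neg at hA'
          exact Finset.disjoint_union_right.mpr
            ⟨ih2 A hA S₁ hS₁ hA'.1, ih2 A hA S₂ hS₂ hA'.2⟩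
        · subst hA
          push_neg at hB'
          exact (Finset.disjoint_union_right.mpr
            ⟨ih2 B hB S₁ hS₁ hB'.1, ih2 B hB S₂ hS₂ hB'.2⟩).symm
        · exact absurd (hA.trans hB.symm) hAB
  | addAdj t S₁ S₂ iht =>
      obtain ⟨ht, _⟩ := h
      exact iht ht

lemma SCD.child_lemma (T : SCD V) (h : T.WF) :
    ∀ {A B : Finset V}, T.isChild A B → A.Nonempty ∧ A ⊂ B := by
  induction T with
  | leaf v => intro A B hc; exact hc.elim
  | union l r ihl ihr =>
      intro A B hc
      rcases hc with hc | hc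
      · exact ihl h.1 hc
      · exact ihr h.2.1 hc
  | addVertex t v iht => intro A B hc; exact iht h.1 hc
  | unite t S₁ S₂ iht =>
      intro A B hc
      obtain ⟨ht, hS₁, hS₂, hne⟩ := h
      rcases hc with hc | ⟨hA, hB⟩
      · exact iht ht hc
      · obtain ⟨hgood, hdisj⟩ := t.labels_good ht
        have hd : Disjoint S₁ S₂ := hdisj S₁ hS₁ S₂ hS₂ hne
        subst hB
        rcases hA with rfl | rfl
        · refine ⟨(hgood A hS₁).1, ?_⟩
          refine ⟨Finset.subset_union_left, fun hsub => ?_⟩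
          obtain ⟨x, hx⟩ := (hgood S₂ hS₂).1
          exact Finset.disjoint_right.mp hd hx (hsub (Finset.mem_union_right _ hx))
        · refine ⟨(hgood A hS₂).1, ?_⟩
          refine ⟨Finset.subset_union_right, fun hsub => ?_⟩
          obtain ⟨x, hx⟩ := (hgood S₁ hS₁).1
          exact Finset.disjoint_left.mp hd hx (hsub (Finset.mem_union_left _ hx))
  | addAdj t S₁ S₂ iht => intro A B hc; exact iht h.1 hc

lemma SCD.adj_lemma (T : SCD V) (h : T.WF) :
    ∀ {A B : Finset V}, T.isAdjArc A B → A.Nonempty ∧ B.Nonempty := by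
  induction T with
  | leaf v => intro A B hc; exact hc.elim
  | union l r ihl ihr =>
      intro A B hc
      rcases hc with hc | hc
      · exact ihl h.1 hc
      · exact ihr h.2.1 hc
  | addVertex t v iht => intro A B hc; exact iht h.1 hc
  | unite t S₁ S₂ iht => intro A B hc; exact iht h.1 hc
  | addAdj t S₁ S₂ iht =>
      intro A B hc
      obtain ⟨ht, hS₁, hS₂, hne⟩ := h
      rcases hc with hc | ⟨rfl, rfl⟩
      · exact iht ht hc
      · obtain ⟨hgood, _⟩ := t.labels_good ht
        exact ⟨(hgood A hS₁).1, (hgood B hS₂).1⟩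

lemma canon_fst (p : Finset V × GK) : (canon p).1 = p.1 := by
  unfold canon; split <;> rfl

lemma canon_of_ne_one {S : Finset V} (k : GK) (h : S.card ≠ 1) : canon (S, k) = (S, k) := by
  unfold canon; simp [h]

lemma canon_snd {S : Finset V} {k : GK} (h : k ≠ GK.inn) : (canon (S, k)).2 ≠ GK.inn := by
  unfold canon; split
  · simp
  · exact h
-- AUX-END

/-- Path-shape invariant for paths in `F*`: a path from `a` to `b` is either a
pure ascent (cp wires), a pure descent (pc wires), a descent-then-ascent through
an original gate, or a mixed path containing adjacency wires, summarized via the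
transitive closure of `arcOf`. -/
def PathInv (T : SCD V) (a b : Finset V × GK) : Prop :=
  (a.2 ≠ GK.inn ∧ b.2 ≠ GK.inn ∧ a.1 ⊂ b.1) ∨
  (a.2 = GK.inn ∧ b.1.Nonempty ∧ b.1 ⊂ a.1) ∨
  (a.2 = GK.inn ∧ b.2 ≠ GK.inn ∧ ∃ w, w ∈ a.1 ∧ w ∈ b.1) ∨
  ((b.1.Nonempty ∧ ∀ u ∈ a.1, ∀ v ∈ b.1, Relation.TransGen (arcOf T) u v) ∨
    (b.2 ≠ GK.inn ∧ ∃ v ∈ b.1, ∀ u ∈ a.1, Relation.TransGen (arcOf T) u v)) ∨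
  (a.2 = GK.inn ∧ ∃ u ∈ a.1,
    ((b.1.Nonempty ∧ ∀ v ∈ b.1, Relation.TransGen (arcOf T) u v) ∨
      (b.2 ≠ GK.inn ∧ ∃ v ∈ b.1, Relation.TransGen (arcOf T) u v)))

lemma inv_base (T : SCD V) (hWF : T.WF) (sel : Finset V → Finset V → GK)
    {a b : Finset V × GK} (hw : ∃ w : WKind, wire T sel w a b) : PathInv T a b := by
  obtain ⟨w, hw⟩ := hw
  cases w with
  | cp =>
      obtain ⟨S₁, S₂, k, hk, hch, hx, hb⟩ := hw
      obtain ⟨hne₁, hss⟩ := T.child_lemma hWF hch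
      have hcard : S₂.card ≠ 1 := by
        have h1 : 0 < S₁.card := Finset.card_pos.mpr hne₁
        have h2 : S₁.card < S₂.card := Finset.card_lt_card hss
        omega
      have hkinn : k ≠ GK.inn := by rcases hk with rfl | rfl <;> simp
      rw [canon_of_ne_one k hcard] at hb
      subst hb hx
      exact Or.inl ⟨canon_snd hkinn, hkinn, by rw [canon_fst]; exact hss⟩
  | pc =>
      obtain ⟨S₁, S₂, hch, ha, hb⟩ := hw
      obtain ⟨hne₁, hss⟩ := T.child_lemma hWF hch
      have hcard : S₂.card ≠ 1 := by
        have h1 : 0 < S₁.card := Finset.card_pos.mpr hne₁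
        have h2 : S₁.card < S₂.card := Finset.card_lt_card hss
        omega
      rw [canon_of_ne_one _ hcard] at ha
      subst ha hb
      exact Or.inr (Or.inl ⟨rfl, by rw [canon_fst]; exact hne₁, by rw [canon_fst]; exact hss⟩)
  | adj =>
      obtain ⟨A₀, B₀, harc, ha, hb⟩ := hw
      obtain ⟨hAne, hBne⟩ := T.adj_lemma hWF harc
      subst ha hb
      refine Or.inr (Or.inr (Or.inr (Or.inl (Or.inl ⟨by rw [canon_fst]; exact hBne, ?_⟩))))
      intro u hu v hv
      rw [canon_fst] at hu hv
      exact Relation.TransGen.single ⟨A₀, B₀, harc, hu, hv⟩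

lemma inv_step (T : SCD V) (hWF : T.WF) (sel : Finset V → Finset V → GK)
    {x a b : Finset V × GK} (hw : ∃ w : WKind, wire T sel w x a) (hinv : PathInv T a b) :
    PathInv T x b := by
  obtain ⟨w, hw⟩ := hw
  cases w with
  | cp =>
      obtain ⟨S₁, S₂, k, hk, hch, hx, ha⟩ := hw
      obtain ⟨hne₁, hss⟩ := T.child_lemma hWF hch
      have hcard : S₂.card ≠ 1 := by
        have h1 : 0 < S₁.card := Finset.card_pos.mpr hne₁
        have h2 : S₁.card < S₂.card := Finset.card_lt_card hss
        omega
      have hkinn : k ≠ GK.inn := by rcases hk with rfl | rfl <;> simp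
      rw [canon_of_ne_one k hcard] at ha
      subst ha hx
      have hx1 : (canon (S₁, k)).1 = S₁ := canon_fst _
      have hx2 : (canon (S₁, k)).2 ≠ GK.inn := canon_snd hkinn
      rcases hinv with ⟨_, hb2, hab⟩ | ⟨ha2, _⟩ | ⟨ha2, _⟩ | hmix1 | ⟨ha2, _⟩
      · exact Or.inl ⟨hx2, hb2, by rw [hx1]; exact hss.trans hab⟩
      · exact absurd ha2 hkinn
      · exact absurd ha2 hkinn
      · refine Or.inr (Or.inr (Or.inr (Or.inl ?_)))
        rcases hmix1 with ⟨hbne, hall⟩ | ⟨hb2, v, hv, hall⟩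
        · exact Or.inl ⟨hbne, fun u hu v hv => hall u (hss.subset (hx1 ▸ hu)) v hv⟩
        · exact Or.inr ⟨hb2, v, hv, fun u hu => hall u (hss.subset (hx1 ▸ hu))⟩
      · exact absurd ha2 hkinn
  | pc =>
      obtain ⟨S₁, S₂, hch, hx, ha⟩ := hw
      obtain ⟨hne₁, hss⟩ := T.child_lemma hWF hch
      have hcard : S₂.card ≠ 1 := by
        have h1 : 0 < S₁.card := Finset.card_pos.mpr hne₁
        have h2 : S₁.card < S₂.card := Finset.card_lt_card hss
        omega
      rw [canon_of_ne_one _ hcard] at hx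
      subst hx
      have ha1 : a.1 = S₁ := by rw [ha, canon_fst]
      by_cases h1 : S₁.card = 1
      · -- a is the original gate (S₁, oand)
        have ha2 : a.2 = GK.oand := by rw [ha]; unfold canon; simp [h1]
        obtain ⟨w0, hw0⟩ := hne₁
        rcases hinv with ⟨_, hb2, hab⟩ | ⟨hinn, _⟩ | ⟨hinn, _⟩ | hmix1 | ⟨hinn, _⟩
        · -- UP ⇒ DU
          exact Or.inr (Or.inr (Or.inl ⟨rfl, hb2, w0, hss.subset hw0,
            hab.subset (ha1 ▸ hw0)⟩))
        · simp [ha2] at hinn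
        · simp [ha2] at hinn
        · -- MIX1 ⇒ MIX2
          refine Or.inr (Or.inr (Or.inr (Or.inr ⟨rfl, w0, hss.subset hw0, ?_⟩)))
          rcases hmix1 with ⟨hbne, hall⟩ | ⟨hb2, v, hv, hall⟩
          · exact Or.inl ⟨hbne, fun v hv => hall w0 (ha1 ▸ hw0) v hv⟩
          · exact Or.inr ⟨hb2, v, hv, hall w0 (ha1 ▸ hw0)⟩
        · simp [ha2] at hinn
      · -- a = (S₁, inn)
        have ha' : a = (S₁, GK.inn) := by rw [ha, canon_of_ne_one _ h1]
        subst ha'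
        rcases hinv with ⟨ha2, _⟩ | ⟨_, hbne, hba⟩ | ⟨_, hb2, w0, hwa, hwb⟩ | hmix1 | ⟨_, u, hu, hend⟩
        · exact absurd rfl ha2
        · exact Or.inr (Or.inl ⟨rfl, hbne, hba.trans hss⟩)
        · exact Or.inr (Or.inr (Or.inl ⟨rfl, hb2, w0, hss.subset hwa, hwb⟩))
        · obtain ⟨w0, hw0⟩ := hne₁
          refine Or.inr (Or.inr (Or.inr (Or.inr ⟨rfl, w0, hss.subset hw0, ?_⟩)))
          rcases hmix1 with ⟨hbne, hall⟩ | ⟨hb2, v, hv, hall⟩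
          · exact Or.inl ⟨hbne, fun v hv => hall w0 hw0 v hv⟩
          · exact Or.inr ⟨hb2, v, hv, hall w0 hw0⟩
        · exact Or.inr (Or.inr (Or.inr (Or.inr ⟨rfl, u, hss.subset hu, hend⟩)))
  | adj =>
      obtain ⟨A₀, B₀, harc, hx, ha⟩ := hw
      obtain ⟨hAne, hBne⟩ := T.adj_lemma hWF harc
      have hx1 : x.1 = A₀ := by rw [hx, canon_fst]
      have ha1 : a.1 = B₀ := by rw [ha, canon_fst]
      have harc' : ∀ u ∈ A₀, ∀ v ∈ B₀, arcOf T u v := fun u hu v hv => ⟨A₀, B₀, harc, hu, hv⟩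
      refine Or.inr (Or.inr (Or.inr (Or.inl ?_)))
      rcases hinv with ⟨_, hb2, hab⟩ | ⟨_, hbne, hba⟩ | ⟨_, hb2, w0, hwa, hwb⟩ | hmix1 | ⟨_, u, hu, hend⟩
      · -- UP
        obtain ⟨v, hv⟩ := hBne
        exact Or.inr ⟨hb2, v, hab.subset (ha1 ▸ hv),
          fun u hu => Relation.TransGen.single (harc' u (hx1 ▸ hu) v hv)⟩
      · -- DOWN
        exact Or.inl ⟨hbne, fun u hu v hv =>
          Relation.TransGen.single (harc' u (hx1 ▸ hu) v (ha1 ▸ hba.subset hv))⟩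
      · -- DU
        exact Or.inr ⟨hb2, w0, hwb,
          fun u hu => Relation.TransGen.single (harc' u (hx1 ▸ hu) w0 (ha1 ▸ hwa))⟩
      · -- MIX1
        obtain ⟨w0, hw0⟩ := hBne
        have hw0a : w0 ∈ a.1 := ha1 ▸ hw0
        rcases hmix1 with ⟨hbne, hall⟩ | ⟨hb2, v, hv, hall⟩
        · exact Or.inl ⟨hbne, fun u hu v hv =>
            Relation.TransGen.head (harc' u (hx1 ▸ hu) w0 hw0) (hall w0 hw0a v hv)⟩
        · exact Or.inr ⟨hb2, v, hv, fun u hu =>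
            Relation.TransGen.head (harc' u (hx1 ▸ hu) w0 hw0) (hall w0 hw0a)⟩
      · -- MIX2
        have huB : u ∈ B₀ := ha1 ▸ hu
        rcases hend with ⟨hbne, hall⟩ | ⟨hb2, v, hv, htg⟩
        · exact Or.inl ⟨hbne, fun u' hu' v hv =>
            Relation.TransGen.head (harc' u' (hx1 ▸ hu') u huB) (hall v hv)⟩
        · exact Or.inr ⟨hb2, v, hv, fun u' hu' =>
            Relation.TransGen.head (harc' u' (hx1 ▸ hu') u huB) htg⟩

/-- If the circuit `F` is acyclic then the circuit `F*` constructed from a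
simplified clique decomposition of `F` is acyclic. -/
theorem fstar_acyclic (T : SCD V) (hWF : T.WF)
    (sel : Finset V → Finset V → GK) (hsel : ∀ A B, sel A B ≠ GK.inn)
    (hF : ∀ v : V, ¬ Relation.TransGen (arcOf T) v v) :
    ∀ g : Finset V × GK,
      ¬ Relation.TransGen (fun a b => ∃ w : WKind, wire T sel w a b) g g := by
  intro g hcyc
  have key : ∀ a, Relation.TransGen (fun a b => ∃ w : WKind, wire T sel w a b) a g →
      PathInv T a g := by
    intro a h
    induction h using Relation.TransGen.head_induction_on with
    | single h => exact inv_base T hWF sel h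
    | head h' _ ih => exact inv_step T hWF sel h' ih
  rcases key g hcyc with ⟨_, _, h⟩ | ⟨_, _, h⟩ | ⟨h1, h2, _⟩ | h | ⟨h1, u, hu, hend⟩
  · exact ssubset_irrefl _ h
  · exact ssubset_irrefl _ h
  · exact h2 h1
  · rcases h with ⟨hne, hall⟩ | ⟨_, v, hv, hall⟩
    · obtain ⟨v, hv⟩ := hne
      exact hF v (hall v hv v hv)
    · exact hF v (hall v hv)
  · rcases hend with ⟨_, hall⟩ | ⟨h2, _⟩
    · exact hF u (hall u hu)
    · exact h2 h1
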